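/- Let A be a D×N real matrix, g₀ ∈ ℝ^D, and suppose the r largest singular values of A are all at least σ > 0 (equivalently, there is an r-dimensional subspace V ⊆ ℝ^N with ‖Av‖ ≥ σ‖v‖ for all v ∈ V). Then for all L, ε, a > 0: (i) the Lebesgue measure of the set {c ∈ ℝ^N : ‖Ac + g₀‖ ≤ Lε and ‖c‖ ≤ a} is at most 2^N L^r ε^r a^{N−r} / σ^r; and (ii) the probability of {c : ‖Ac + g₀‖ ≤ Lε} relative to the ball {c : ‖c‖ ≤ a} is at most N! L^r ε^r / (σ^r a^r). -/

import Mathlib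

open MeasureTheory Metric

lemma aux_abs_le {ι : Type*} [Fintype ι] (z : EuclideanSpace ℝ ι) (i : ι) : |z i| ≤ ‖z‖ := by
  rw [EuclideanSpace.norm_eq]
  have h1 : |z i| = Real.sqrt (‖z i‖ ^ 2) := by
    rw [Real.sqrt_sq (norm_nonneg _), Real.norm_eq_abs]
  rw [h1]
  apply Real.sqrt_le_sqrt
  exact Finset.single_le_sum (f := fun j => ‖z j‖ ^ 2) (fun j _ => sq_nonneg _) (Finset.mem_univ i)

lemma aux_nat (N : ℕ) : N ^ N ≤ N.factorial * N.factorial := by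
  have h2 : ∏ k ∈ Finset.range N, (N - k) = N.factorial := by
    rw [← Finset.prod_range_reflect, ← Finset.prod_range_add_one_eq_factorial]
    apply Finset.prod_congr rfl
    intro j hj
    rw [Finset.mem_range] at hj
    omega
  have h3 : ∏ k ∈ Finset.range N, ((k + 1) * (N - k)) = N.factorial * N.factorial := by
    rw [Finset.prod_mul_distrib, h2, Finset.prod_range_add_one_eq_factorial]
  rw [← h3]
  calc N ^ N = ∏ _k ∈ Finset.range N, N := by simp
    _ ≤ ∏ k ∈ Finset.range N, ((k + 1) * (N - k)) := by
        apply Finset.prod_le_prod'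
        intro k hk
        rw [Finset.mem_range] at hk
        have hm : 1 ≤ N - k := by omega
        calc N = k + (N - k) := by omega
          _ ≤ k * (N - k) + (N - k) := by
              have := Nat.le_mul_of_pos_right k hm
              omega
          _ = (k + 1) * (N - k) := by ring

lemma aux_sqrt (N : ℕ) : Real.sqrt N ^ N ≤ N.factorial := by
  have h0 : (0:ℝ) ≤ Real.sqrt N ^ N := by positivity
  have hsq : (Real.sqrt N ^ N) ^ 2 = (N : ℝ) ^ N := by
    rw [← pow_mul, mul_comm, pow_mul, Real.sq_sqrt (by positivity)]
  have h1 : ((N : ℝ) ^ N) ≤ ((N.factorial : ℝ)) ^ 2 := by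
    rw [sq]
    exact_mod_cast aux_nat N
  calc Real.sqrt N ^ N = Real.sqrt ((Real.sqrt N ^ N) ^ 2) := by
        rw [Real.sqrt_sq h0]
    _ ≤ Real.sqrt (((N.factorial : ℝ)) ^ 2) := Real.sqrt_le_sqrt (by rw [hsq]; exact h1)
    _ = N.factorial := Real.sqrt_sq (by positivity)

set_option maxHeartbeats 1000000 in
/-- Transfer of volume lemma (Sauer–Yorke–Casdagli). If the `r` largest singular values of
the `D × N` matrix `A` are at least `σ > 0` (equivalently, there is an `r`-dimensional
subspace on which `‖Av‖ ≥ σ‖v‖`), then the set where `‖Ac + g₀‖ ≤ Lε` and `‖c‖ ≤ a`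
has small measure, and correspondingly small probability relative to the ball of radius `a`. -/
theorem stmt0 (D N r : ℕ) (A : Matrix (Fin D) (Fin N) ℝ)
    (g₀ : EuclideanSpace ℝ (Fin D)) (σ : ℝ) (hσ : 0 < σ)
    (hA : ∃ V : Submodule ℝ (EuclideanSpace ℝ (Fin N)),
      Module.finrank ℝ V = r ∧ ∀ v ∈ V, σ * ‖v‖ ≤ ‖Matrix.toEuclideanLin A v‖)
    (L ε a : ℝ) (hL : 0 < L) (hε : 0 < ε) (ha : 0 < a) :
    volume {c : EuclideanSpace ℝ (Fin N) |
        ‖Matrix.toEuclideanLin A c + g₀‖ ≤ L * ε ∧ ‖c‖ ≤ a}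
      ≤ ENNReal.ofReal (2 ^ N * L ^ r * ε ^ r * a ^ (N - r) / σ ^ r) ∧
    volume ({c : EuclideanSpace ℝ (Fin N) | ‖Matrix.toEuclideanLin A c + g₀‖ ≤ L * ε}
        ∩ closedBall 0 a) / volume (closedBall (0 : EuclideanSpace ℝ (Fin N)) a)
      ≤ ENNReal.ofReal ((N.factorial : ℝ) * L ^ r * ε ^ r / (σ ^ r * a ^ r)) := by
  classical
  obtain ⟨V, hVr, hV⟩ := hA
  have hrN : r ≤ N := by
    rw [← hVr]
    simpa [finrank_euclideanSpace_fin] using V.finrank_le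
  -- card lemmas
  have cardH : Fintype.card {i : Fin N // (i:ℕ) < r} = r := by
    have e : {i : Fin N // (i:ℕ) < r} ≃ Fin r :=
      { toFun := fun i => ⟨i.1, i.2⟩
        invFun := fun j => ⟨⟨j.1, lt_of_lt_of_le j.2 hrN⟩, j.2⟩
        left_inv := fun i => rfl
        right_inv := fun j => rfl }
    rw [Fintype.card_congr e, Fintype.card_fin]
  have cardT : Fintype.card {i : Fin N // ¬ (i:ℕ) < r} = N - r := by
    have e : {i : Fin N // ¬ (i:ℕ) < r} ≃ Fin (N - r) :=
      { toFun := fun i => ⟨i.1.1 - r, by have h1 := i.1.2; have h2 := i.2; omega⟩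
        invFun := fun j => ⟨⟨j.1 + r, by have := j.2; omega⟩, by simp⟩
        left_inv := fun i => Subtype.ext (Fin.ext (by have := i.2; simp; omega))
        right_inv := fun j => Fin.ext (by simp) }
    rw [Fintype.card_congr e, Fintype.card_fin]
  -- adapted orthonormal basis
  let bV : OrthonormalBasis (Fin r) ℝ V := (stdOrthonormalBasis ℝ V).reindex (finCongr hVr)
  let v : Fin N → EuclideanSpace ℝ (Fin N) :=
    fun i => if h : (i : ℕ) < r then (bV ⟨i, h⟩ : EuclideanSpace ℝ (Fin N)) else 0
  have hv : Orthonormal ℝ (Set.restrict {i : Fin N | (i:ℕ) < r} v) := by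
    have h1 : Orthonormal ℝ (fun k : Fin r => (bV k : EuclideanSpace ℝ (Fin N))) :=
      bV.orthonormal.comp_linearIsometry V.subtypeₗᵢ
    have h2 : Set.restrict {i : Fin N | (i:ℕ) < r} v
        = (fun k : Fin r => (bV k : EuclideanSpace ℝ (Fin N))) ∘ (fun i => ⟨i.1, i.2⟩) := by
      funext i
      simp only [Set.restrict_apply, Function.comp_apply, v]
      exact dif_pos (show ((i : Fin N) : ℕ) < r from i.2)
    rw [h2]
    exact h1.comp _ (fun i j hij => Subtype.ext (Fin.ext (by simpa using congrArg Fin.val hij)))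
  obtain ⟨b, hb⟩ := hv.exists_orthonormalBasis_extension_of_card_eq
    (by simp [finrank_euclideanSpace_fin])
  have hbV : ∀ i : Fin N, (i:ℕ) < r → b i ∈ V := by
    intro i hi
    rw [hb i hi]
    simp only [v, dif_pos hi]
    exact SetLike.coe_mem _
  have hmemV : ∀ c : EuclideanSpace ℝ (Fin N),
      (∀ i : Fin N, ¬((i:ℕ) < r) → b.repr c i = 0) → c ∈ V := by
    intro c hc
    rw [← b.sum_repr c]
    apply Submodule.sum_mem
    intro i _
    by_cases hi : (i:ℕ) < r
    · exact Submodule.smul_mem _ _ (hbV i hi)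
    · rw [hc i hi, zero_smul]; exact V.zero_mem
  -- the set S
  set T := Matrix.toEuclideanLin A with hT
  set S := {c : EuclideanSpace ℝ (Fin N) | ‖T c + g₀‖ ≤ L * ε ∧ ‖c‖ ≤ a} with hSdef
  have hcont : Continuous (fun c : EuclideanSpace ℝ (Fin N) => T c) :=
    LinearMap.continuous_of_finiteDimensional _
  have hSc : IsClosed S := by
    have : S = (fun c => ‖T c + g₀‖) ⁻¹' (Set.Iic (L*ε)) ∩ (fun c => ‖c‖) ⁻¹' (Set.Iic a) := rfl
    rw [this]
    exact (isClosed_Iic.preimage ((hcont.add continuous_const).norm)).inter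
      (isClosed_Iic.preimage continuous_norm)
  -- measure machinery
  let p : Fin N → Prop := fun i => (i : ℕ) < r
  let eP := MeasurableEquiv.piEquivPiSubtypeProd (fun _ : Fin N => ℝ) p
  let eE := (MeasurableEquiv.toLp 2 (Fin N → ℝ)).symm
  let G : ({i : Fin N // p i} → ℝ) × ({i : Fin N // ¬ p i} → ℝ) → EuclideanSpace ℝ (Fin N) :=
    (⇑b.repr.symm ∘ ⇑eE.symm) ∘ ⇑eP.symm
  have hG : MeasurePreserving G volume volume :=
    (b.measurePreserving_repr_symm.comp
      (EuclideanSpace.volume_preserving_symm_measurableEquiv_toLp (Fin N)).symm).comp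
      (volume_preserving_piEquivPiSubtypeProd (fun _ : Fin N => ℝ) p).symm
  have hGcoord : ∀ (x : {i : Fin N // p i} → ℝ) (y : {i : Fin N // ¬ p i} → ℝ) (i : Fin N),
      b.repr (G (x, y)) i = if h : p i then x ⟨i, h⟩ else y ⟨i, h⟩ := by
    intro x y i
    simp only [G, Function.comp_apply, LinearIsometryEquiv.apply_symm_apply]
    rfl
  set d := 2*L*ε/σ with hd
  have hd0 : 0 ≤ d := by positivity
  -- slice diameter bound
  have hdiff : ∀ (x₁ x₂ : {i : Fin N // p i} → ℝ) (y : {i : Fin N // ¬ p i} → ℝ),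
      G (x₁, y) ∈ S → G (x₂, y) ∈ S → ∀ j : {i : Fin N // p i}, |x₁ j - x₂ j| ≤ d := by
    intro x₁ x₂ y h1 h2 j
    set c₁ := G (x₁, y)
    set c₂ := G (x₂, y)
    have hmem : c₁ - c₂ ∈ V := by
      apply hmemV
      intro i hi
      have : b.repr (c₁ - c₂) i = b.repr c₁ i - b.repr c₂ i := by
        rw [map_sub]; rfl
      rw [this, hGcoord, hGcoord, dif_neg hi, dif_neg hi, sub_self]
    have hnorm : σ * ‖c₁ - c₂‖ ≤ 2*L*ε := by
      refine (hV _ hmem).trans ?_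
      have : T (c₁ - c₂) = (T c₁ + g₀) - (T c₂ + g₀) := by
        rw [map_sub]; abel
      rw [this]
      calc ‖(T c₁ + g₀) - (T c₂ + g₀)‖ ≤ ‖T c₁ + g₀‖ + ‖T c₂ + g₀‖ := norm_sub_le _ _
        _ ≤ L*ε + L*ε := add_le_add h1.1 h2.1
        _ = 2*L*ε := by ring
    have hc : ‖c₁ - c₂‖ ≤ d := by
      rw [hd, le_div_iff₀ hσ]
      linarith [hnorm]
    have habs : |x₁ j - x₂ j| = |b.repr (c₁ - c₂) j.1| := by
      have : b.repr (c₁ - c₂) j.1 = b.repr c₁ j.1 - b.repr c₂ j.1 := by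
        rw [map_sub]; rfl
      rw [this, hGcoord, hGcoord, dif_pos j.2, dif_pos j.2]
    rw [habs]
    calc |b.repr (c₁ - c₂) j.1| ≤ ‖b.repr (c₁ - c₂)‖ := aux_abs_le _ _
      _ = ‖c₁ - c₂‖ := b.repr.norm_map _
      _ ≤ d := hc
  -- main volume bound
  have key : volume S ≤ ENNReal.ofReal d ^ r * ENNReal.ofReal (2*a) ^ (N - r) := by
    have hSm : MeasurableSet S := hSc.measurableSet
    have hbox : MeasurableSet (Set.univ.pi fun _ : {i : Fin N // ¬ p i} => Set.Icc (-a) a) :=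
      MeasurableSet.univ_pi fun _ => measurableSet_Icc
    rw [← hG.measure_preimage hSm.nullMeasurableSet, Measure.volume_eq_prod,
      Measure.prod_apply_symm (hSm.preimage hG.measurable)]
    calc (∫⁻ y, volume ((fun x => (x, y)) ⁻¹' (G ⁻¹' S)))
        ≤ ∫⁻ y, (Set.univ.pi fun _ : {i : Fin N // ¬ p i} => Set.Icc (-a) a).indicator
            (fun _ => ENNReal.ofReal d ^ r) y := by
          apply lintegral_mono
          intro y
          show volume ((fun x => (x, y)) ⁻¹' (G ⁻¹' S)) ≤ _
          set sl := (fun x => (x, y)) ⁻¹' (G ⁻¹' S) with hsl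
          rcases Set.eq_empty_or_nonempty sl with hemp | ⟨x₀, hx₀⟩
          · have hz : volume sl = 0 := by rw [hemp]; simp
            rw [hz]
            exact bot_le
          · have hx₀S : G (x₀, y) ∈ S := hx₀
            have hybox : y ∈ (Set.univ.pi fun _ : {i : Fin N // ¬ p i} => Set.Icc (-a) a) := by
              intro i _
              have h₁ : |b.repr (G (x₀, y)) i.1| ≤ a := by
                refine (aux_abs_le _ _).trans ?_
                rw [b.repr.norm_map]
                exact hx₀S.2
              rw [hGcoord, dif_neg i.2] at h₁
              exact Set.mem_Icc.mpr (abs_le.mp h₁)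
            rw [Set.indicator_of_mem hybox]
            set m : {i : Fin N // p i} → ℝ := fun j => sInf ((fun x' => x' j) '' sl) with hm
            have hsub : sl ⊆ Set.univ.pi fun j => Set.Icc (m j) (m j + d) := by
              intro x hx j _
              have hxS : G (x, y) ∈ S := hx
              have hbdd : BddBelow ((fun x' => x' j) '' sl) := by
                refine ⟨x₀ j - d, ?_⟩
                rintro t ⟨x', hx', rfl⟩
                have h2 := abs_le.mp (hdiff x₀ x' y hx₀S hx' j)
                linarith [h2.1, h2.2]
              constructor
              · exact csInf_le hbdd ⟨x, hx, rfl⟩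
              · have hlow : x j - d ∈ lowerBounds ((fun x' => x' j) '' sl) := by
                  rintro t ⟨x', hx', rfl⟩
                  have h2 := abs_le.mp (hdiff x x' y hxS hx' j)
                  linarith [h2.1, h2.2]
                have h3 : x j - d ≤ m j := le_csInf ⟨x₀ j, ⟨x₀, hx₀, rfl⟩⟩ hlow
                linarith
            calc volume sl ≤ volume (Set.univ.pi fun j => Set.Icc (m j) (m j + d)) :=
                  measure_mono hsub
              _ = ∏ j : {i : Fin N // p i}, volume (Set.Icc (m j) (m j + d)) := volume_pi_pi _
              _ = ENNReal.ofReal d ^ r := by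
                  simp only [Real.volume_Icc, add_sub_cancel_left]
                  rw [Finset.prod_const, Finset.card_univ, cardH]
      _ = ENNReal.ofReal d ^ r * volume (Set.univ.pi fun _ : {i : Fin N // ¬ p i} => Set.Icc (-a) a) :=
          lintegral_indicator_const hbox _
      _ = ENNReal.ofReal d ^ r * ENNReal.ofReal (2*a) ^ (N - r) := by
          rw [volume_pi_pi]
          simp only [Real.volume_Icc]
          rw [Finset.prod_const, Finset.card_univ, cardT]
          congr 2
          ring
  have part1 : volume S ≤ ENNReal.ofReal (2 ^ N * L ^ r * ε ^ r * a ^ (N - r) / σ ^ r) := by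
    refine key.trans ?_
    rw [← ENNReal.ofReal_pow hd0, ← ENNReal.ofReal_pow (by linarith), ← ENNReal.ofReal_mul (by positivity)]
    apply ENNReal.ofReal_le_ofReal
    have h2 : (2:ℝ)^r * 2^(N-r) = 2^N := by rw [← pow_add]; congr 1; omega
    have heq : d^r * (2*a)^(N-r) = 2 ^ N * L ^ r * ε ^ r * a ^ (N - r) / σ ^ r := by
      rw [hd, div_pow, mul_pow, mul_pow, mul_pow, ← h2]
      field_simp
    rw [heq]
  constructor
  · exact part1
  · have hseteq : {c : EuclideanSpace ℝ (Fin N) | ‖T c + g₀‖ ≤ L * ε} ∩ closedBall 0 a = S := by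
      ext c
      simp only [hSdef, Set.mem_inter_iff, Set.mem_setOf_eq, mem_closedBall_zero_iff]
    rw [hseteq]
    have hb0 : volume (closedBall (0 : EuclideanSpace ℝ (Fin N)) a) ≠ 0 :=
      (measure_closedBall_pos volume 0 ha).ne'
    have hbt : volume (closedBall (0 : EuclideanSpace ℝ (Fin N)) a) ≠ ⊤ :=
      measure_closedBall_lt_top.ne
    rw [ENNReal.div_le_iff hb0 hbt]
    have hEEs : MeasurePreserving (⇑eE.symm) volume volume :=
      (EuclideanSpace.volume_preserving_symm_measurableEquiv_toLp (Fin N)).symm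
    have hball_lb : ENNReal.ofReal ((2*a/Real.sqrt N)^N)
        ≤ volume (closedBall (0 : EuclideanSpace ℝ (Fin N)) a) := by
      rw [← hEEs.measure_preimage measurableSet_closedBall.nullMeasurableSet]
      have hsub : (Set.univ.pi fun _ : Fin N => Set.Icc (-(a/Real.sqrt N)) (a/Real.sqrt N))
          ⊆ ⇑eE.symm ⁻¹' closedBall 0 a := by
        intro x hx
        simp only [Set.mem_preimage, mem_closedBall_zero_iff]
        rw [EuclideanSpace.norm_eq]
        have hbound : ∀ i : Fin N, ‖(eE.symm x : EuclideanSpace ℝ (Fin N)) i‖^2 ≤ a^2/N := by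
          intro i
          have hxi := hx i (Set.mem_univ i)
          have habs : |x i| ≤ a/Real.sqrt N := abs_le.mpr ⟨hxi.1, hxi.2⟩
          have hcoord : (eE.symm x : EuclideanSpace ℝ (Fin N)) i = x i := rfl
          rw [hcoord, Real.norm_eq_abs]
          calc |x i|^2 ≤ (a/Real.sqrt N)^2 := by
                apply pow_le_pow_left₀ (abs_nonneg _) habs
            _ = a^2/N := by
                rw [div_pow, Real.sq_sqrt (by positivity)]
        have hsum : ∑ i : Fin N, ‖(eE.symm x : EuclideanSpace ℝ (Fin N)) i‖^2 ≤ a^2 := by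
          calc ∑ i : Fin N, ‖(eE.symm x : EuclideanSpace ℝ (Fin N)) i‖^2
              ≤ ∑ _i : Fin N, a^2/N := Finset.sum_le_sum (fun i _ => hbound i)
            _ = N * (a^2/N) := by
                rw [Finset.sum_const, Finset.card_univ, Fintype.card_fin, nsmul_eq_mul]
            _ ≤ a^2 := by
                rcases Nat.eq_zero_or_pos N with h|h
                · simp [h]; positivity
                · rw [mul_div_cancel₀]
                  have : (N:ℝ) ≠ 0 := by exact_mod_cast h.ne'
                  exact this
        calc Real.sqrt (∑ i : Fin N, ‖(eE.symm x : EuclideanSpace ℝ (Fin N)) i‖^2)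
            ≤ Real.sqrt (a^2) := Real.sqrt_le_sqrt hsum
          _ = a := Real.sqrt_sq ha.le
      calc ENNReal.ofReal ((2*a/Real.sqrt N)^N)
          = volume (Set.univ.pi fun _ : Fin N => Set.Icc (-(a/Real.sqrt N)) (a/Real.sqrt N)) := by
            have hIcc : volume (Set.Icc (-(a/Real.sqrt N)) (a/Real.sqrt N))
                = ENNReal.ofReal (2*a/Real.sqrt N) := by
              rw [Real.volume_Icc]; congr 1; ring
            rw [volume_pi_pi]
            simp only [hIcc]
            rw [Finset.prod_const, Finset.card_univ, Fintype.card_fin,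
              ← ENNReal.ofReal_pow (by positivity)]
        _ ≤ _ := measure_mono hsub
    calc volume S ≤ ENNReal.ofReal (2 ^ N * L ^ r * ε ^ r * a ^ (N - r) / σ ^ r) := part1
      _ ≤ ENNReal.ofReal ((N.factorial:ℝ) * L ^ r * ε ^ r / (σ ^ r * a ^ r))
            * ENNReal.ofReal ((2*a/Real.sqrt N)^N) := by
          rw [← ENNReal.ofReal_mul (by positivity)]
          apply ENNReal.ofReal_le_ofReal
          have hsp : 0 < Real.sqrt N ^ N := by
            rcases Nat.eq_zero_or_pos N with h|h
            · simp [h]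
            · exact pow_pos (Real.sqrt_pos.mpr (by exact_mod_cast h)) _
          have haN : a^r * a^(N-r) = a^N := by rw [← pow_add]; congr 1; omega
          have hXeq : (N.factorial:ℝ) * L ^ r * ε ^ r / (σ ^ r * a ^ r) * (2*a/Real.sqrt N)^N
              = (2 ^ N * L ^ r * ε ^ r * a ^ (N - r) / σ ^ r) * ((N.factorial:ℝ)/Real.sqrt N ^ N) := by
            rw [div_pow, mul_pow]
            field_simp
            rw [← haN]
          rw [hXeq]
          exact le_mul_of_one_le_right (by positivity) ((one_le_div hsp).mpr (aux_sqrt N))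
      _ ≤ ENNReal.ofReal ((N.factorial:ℝ) * L ^ r * ε ^ r / (σ ^ r * a ^ r))
            * volume (closedBall (0 : EuclideanSpace ℝ (Fin N)) a) :=
          by gcongr
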